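/- arXiv:1810.06087 — 2 statements merged into one kernel-verified Lean document; each statement's English description precedes it below -/
import Mathlib

section
/- For every 0 < ε < 1/2 there exists a constant 0 < C_ε < ∞, depending only on ε, such that for every discrete-time Markov transition kernel g on a σ-compact metric state space with stationary distribution π, the mixing time of the lazy kernel satisfies t_L(ε) ≤ C_ε · t_m(ε). -/
open MeasureTheory ENNReal

noncomputable section

namespace MixHit

variable {X : Type*} [MeasurableSpace X]

/-- Total variation distance between two Borel measures. -/
def tv (μ ν : Measure X) : ℝ≥0∞ :=
  ⨆ (A : Set X) (_ : MeasurableSet A), (μ A - ν A) ⊔ (ν A - μ A)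

/-- `g` is a Markov transition kernel: each `g x` is a (Borel) probability measure,
measurably in `x`. -/
def IsMarkov (g : X → Measure X) : Prop :=
  (∀ x, IsProbabilityMeasure (g x)) ∧
    ∀ A : Set X, MeasurableSet A → Measurable fun x => g x A

/-- `t`-step transition probabilities (`iterK g 0 x = δ_x`). -/
def iterK (g : X → Measure X) : ℕ → X → Measure X
  | 0 => fun x => Measure.dirac x
  | n + 1 => fun x => (g x).bind (iterK g n)

/-- `π` is a stationary distribution for `g`. -/
def Stationary (g : X → Measure X) (π : Measure X) : Prop :=
  ∀ A : Set X, MeasurableSet A → ∫⁻ x, g x A ∂π = π A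

/-- `g` is reversible with respect to `π`. -/
def Reversible (g : X → Measure X) (π : Measure X) : Prop :=
  ∀ A B : Set X, MeasurableSet A → MeasurableSet B →
    ∫⁻ x in A, g x B ∂π = ∫⁻ x in B, g x A ∂π

/-- The lazy kernel `g_L(x,·) = (1/2) g(x,·) + (1/2) δ_x`. -/
def lazy (g : X → Measure X) : X → Measure X := fun x =>
  (2 : ℝ≥0∞)⁻¹ • g x + (2 : ℝ≥0∞)⁻¹ • Measure.dirac x

/-- Mixing time `min {t : sup_x ‖g^t(x,·) − π‖ ≤ ε}`, as an element of `ℝ≥0∞`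
(`⊤` if there is no such `t`). -/
def mixTime (g : X → Measure X) (π : Measure X) (ε : ℝ≥0∞) : ℝ≥0∞ :=
  ⨅ (t : ℕ) (_ : ∀ x, tv (iterK g t x) π ≤ ε), (t : ℝ≥0∞)

/-- `d̄(t) = sup_{x,y} ‖g^t(x,·) − g^t(y,·)‖`. -/
def dbar (g : X → Measure X) (t : ℕ) : ℝ≥0∞ :=
  ⨆ (x : X) (y : X), tv (iterK g t x) (iterK g t y)

/-- Standardized mixing time `min {t : d̄(t) ≤ ε}` (`⊤` if there is no such `t`). -/
def stdMix (g : X → Measure X) (ε : ℝ≥0∞) : ℝ≥0∞ :=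
  ⨅ (t : ℕ) (_ : dbar g t ≤ ε), (t : ℝ≥0∞)

/-- `P_x(τ_A = t)` for the chain with kernel `g` started at `x`, where
`τ_A = min {t : X_t ∈ A}` (first-step recursion). -/
def hitEq (g : X → Measure X) (A : Set X) : ℕ → X → ℝ≥0∞
  | 0 => fun x => A.indicator (fun _ => 1) x
  | n + 1 => fun x => Aᶜ.indicator (fun x' => ∫⁻ y, hitEq g A n y ∂(g x')) x

/-- `P_x(τ_A ≤ t)`. -/
def hitLE (g : X → Measure X) (A : Set X) (t : ℕ) (x : X) : ℝ≥0∞ :=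
  ∑ s ∈ Finset.range (t + 1), hitEq g A s x

/-- `E_x[τ_A] = ∑_{t ≥ 0} P_x(τ_A > t)`. -/
def expHit (g : X → Measure X) (A : Set X) (x : X) : ℝ≥0∞ :=
  ∑' t : ℕ, (1 - hitLE g A t x)

/-- Maximum hitting time `t_H(α) = sup {E_x[τ_A] : x ∈ X, A Borel, π(A) ≥ α}`. -/
def maxHit (g : X → Measure X) (π : Measure X) (α : ℝ) : ℝ≥0∞ :=
  ⨆ (x : X) (A : Set X) (_ : MeasurableSet A) (_ : ENNReal.ofReal α ≤ π A),
    expHit g A x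

/-- Large hitting time
`τ_g(α) = min {t : inf {P_x(τ_A ≤ t) : x ∈ X, A Borel, π(A) ≥ α} > 0.9}`. -/
def largeHit (g : X → Measure X) (π : Measure X) (α : ℝ) : ℝ≥0∞ :=
  ⨅ (t : ℕ) (_ : (9 / 10 : ℝ≥0∞) <
      ⨅ (x : X) (A : Set X) (_ : MeasurableSet A) (_ : ENNReal.ofReal α ≤ π A),
        hitLE g A t x),
    (t : ℝ≥0∞)

/-- The strong Feller property: continuity of `x ↦ g(x,·)` in total variation. -/
def StrongFeller [PseudoMetricSpace X] (g : X → Measure X) : Prop :=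
  ∀ x : X, ∀ ε : ℝ, 0 < ε → ∃ δ : ℝ, 0 < δ ∧
    ∀ y : X, dist y x < δ → tv (g x) (g y) < ENNReal.ofReal ε

/-- Law of `X_t` on the event that `t` is the first time the chain lies in `S`. -/
def enterDist (g : X → Measure X) (S : Set X) : ℕ → X → Measure X
  | 0 => fun x => (Measure.dirac x).restrict S
  | n + 1 => fun x => Sᶜ.indicator (fun x' => (g x').bind (enterDist g S n)) x

/-- Law of the chain's position at its first entrance (at a time `≥ 0`) into `S`. -/
def hitMeasure (g : X → Measure X) (S : Set X) (x : X) : Measure X :=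
  Measure.sum fun t => enterDist g S t x

/-- One step of the trace of `g` on `S`: take one `g`-step, then run until the
first entrance into `S`. -/
def traceK (g : X → Measure X) (S : Set X) : X → Measure X :=
  fun x => (g x).bind (hitMeasure g S)

/-- The trace of `g` on `S`, viewed as a kernel on the subtype `S`. -/
def traceSub (g : X → Measure X) (S : Set X) : S → Measure S :=
  fun x => (traceK g S (x : X)).comap (Subtype.val)

/-- Normalization of `π` to `S`, as a measure on the subtype `S`. -/
def normSub (π : Measure X) (S : Set X) : Measure S :=
  (π S)⁻¹ • π.comap (Subtype.val : S → X)

/-- Ergodicity: from every starting point, the chain converges to `π`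
in total variation. -/
def ErgodicK (g : X → Measure X) (π : Measure X) : Prop :=
  Stationary g π ∧
    ∀ x : X, Filter.Tendsto (fun t => tv (iterK g t x) π) Filter.atTop (nhds 0)



section Proof15

open Finset

variable {X : Type*} [MeasurableSpace X] {g : X → Measure X}

lemma tv_le_of_forall {μ ν : Measure X} {c : ℝ≥0∞}
    (h : ∀ A : Set X, MeasurableSet A → (μ A - ν A) ⊔ (ν A - μ A) ≤ c) :
    tv μ ν ≤ c :=
  iSup_le fun A => iSup_le fun hA => h A hA

lemma pair_le_tv {μ ν : Measure X} {A : Set X} (hA : MeasurableSet A) :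
    (μ A - ν A) ⊔ (ν A - μ A) ≤ tv μ ν :=
  le_iSup₂ (f := fun (A : Set X) (_ : MeasurableSet A) => (μ A - ν A) ⊔ (ν A - μ A)) A hA

lemma sub_le_tv {μ ν : Measure X} {A : Set X} (hA : MeasurableSet A) :
    μ A - ν A ≤ tv μ ν := le_trans le_sup_left (pair_le_tv hA)

lemma sub_le_tv' {μ ν : Measure X} {A : Set X} (hA : MeasurableSet A) :
    ν A - μ A ≤ tv μ ν := le_trans le_sup_right (pair_le_tv hA)

lemma tv_symm (μ ν : Measure X) : tv μ ν = tv ν μ := by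
  unfold tv
  congr 1
  ext A
  congr 1
  ext hA
  exact sup_comm _ _

lemma tv_le_one (μ ν : Measure X) [IsProbabilityMeasure μ] [IsProbabilityMeasure ν] :
    tv μ ν ≤ 1 := by
  refine tv_le_of_forall fun A hA => sup_le ?_ ?_
  · exact le_trans tsub_le_self prob_le_one
  · exact le_trans tsub_le_self prob_le_one

lemma tv_triangle (μ ν ρ : Measure X) : tv μ ρ ≤ tv μ ν + tv ν ρ := by
  refine tv_le_of_forall fun A hA => sup_le ?_ ?_
  · calc μ A - ρ A ≤ (μ A - ν A) + (ν A - ρ A) := tsub_le_tsub_add_tsub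
      _ ≤ tv μ ν + tv ν ρ := add_le_add (sub_le_tv hA) (sub_le_tv hA)
  · calc ρ A - μ A ≤ (ρ A - ν A) + (ν A - μ A) := tsub_le_tsub_add_tsub
      _ ≤ tv ν ρ + tv μ ν := add_le_add (sub_le_tv' hA) (sub_le_tv' hA)
      _ = tv μ ν + tv ν ρ := add_comm _ _

lemma markov_measurable (hg : IsMarkov g) : Measurable g :=
  Measure.measurable_of_measurable_coe g fun A hA => hg.2 A hA

lemma lintegral_meas (hg : IsMarkov g) {f : X → ℝ≥0∞} (hf : Measurable f) :
    Measurable fun x => ∫⁻ y, f y ∂(g x) := by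
  let κ : ProbabilityTheory.Kernel X X := ⟨g, markov_measurable hg⟩
  haveI : ProbabilityTheory.IsMarkovKernel κ := ⟨fun x => hg.1 x⟩
  exact hf.lintegral_kernel (κ := κ)

lemma iterK_meas (hg : IsMarkov g) : ∀ n, Measurable (iterK g n)
  | 0 => Measure.measurable_dirac
  | (n+1) => by
    refine Measure.measurable_of_measurable_coe _ fun A hA => ?_
    have h := iterK_meas hg n
    simp only [iterK]
    simp_rw [Measure.bind_apply hA h.aemeasurable]
    exact lintegral_meas hg ((Measure.measurable_coe hA).comp h)

lemma iterK_apply_meas (hg : IsMarkov g) (n : ℕ) {A : Set X} (hA : MeasurableSet A) :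
    Measurable fun x => iterK g n x A :=
  (Measure.measurable_coe hA).comp (iterK_meas hg n)

lemma iterK_prob (hg : IsMarkov g) : ∀ (n : ℕ) (x : X), IsProbabilityMeasure (iterK g n x)
  | 0, x => by
    simp only [iterK]
    infer_instance
  | (n+1), x => by
    constructor
    show ((g x).bind (iterK g n)) Set.univ = 1
    rw [Measure.bind_apply MeasurableSet.univ (iterK_meas hg n).aemeasurable]
    have h1 : ∀ y, iterK g n y Set.univ = 1 := fun y => (iterK_prob hg n y).measure_univ
    haveI := hg.1 x
    simp only [h1, lintegral_one, measure_univ]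

lemma iterK_add (hg : IsMarkov g) (s t : ℕ) (x : X) :
    iterK g (s + t) x = (iterK g s x).bind (iterK g t) := by
  induction s generalizing x with
  | zero =>
    rw [Nat.zero_add]
    exact (Measure.dirac_bind (iterK_meas hg t) x).symm
  | succ s ih =>
    have hst : s + 1 + t = (s + t) + 1 := by omega
    rw [hst]
    calc iterK g ((s+t)+1) x = (g x).bind (iterK g (s+t)) := rfl
      _ = (g x).bind (fun z => (iterK g s z).bind (iterK g t)) := by
          congr 1
          funext z
          exact ih z
      _ = ((g x).bind (iterK g s)).bind (iterK g t) :=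
          (Measure.bind_bind (iterK_meas hg s).aemeasurable (iterK_meas hg t).aemeasurable).symm
      _ = (iterK g (s+1) x).bind (iterK g t) := rfl

lemma bind_stationary (hg : IsMarkov g) {π : Measure X} (hπ : Stationary g π) :
    π.bind g = π := by
  refine Measure.ext fun A hA => ?_
  rw [Measure.bind_apply hA (markov_measurable hg).aemeasurable]
  exact hπ A hA

lemma iterK_stationary (hg : IsMarkov g) {π : Measure X} (hπ : Stationary g π) :
    ∀ k, π.bind (iterK g k) = π
  | 0 => Measure.bind_dirac
  | (k+1) => by
    calc π.bind (iterK g (k+1)) = π.bind (fun x => (g x).bind (iterK g k)) := rfl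
      _ = (π.bind g).bind (iterK g k) :=
          (Measure.bind_bind (markov_measurable hg).aemeasurable (iterK_meas hg k).aemeasurable).symm
      _ = π.bind (iterK g k) := by rw [bind_stationary hg hπ]
      _ = π := iterK_stationary hg hπ k

lemma add_tsub_add_le (a b c : ℝ≥0∞) : (a + c) - (b + c) ≤ a - b := by
  rw [tsub_le_iff_right]
  calc a + c ≤ (a - b) + b + c := add_le_add le_tsub_add le_rfl
    _ = a - b + (b + c) := by ring

lemma lintegral_diff_le [Nonempty X] {ρ σ : Measure X} {c D : ℝ≥0∞}
    (hρ : ρ Set.univ = c) (hσ : σ Set.univ = c)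
    {f : X → ℝ≥0∞} (hf : ∀ x y, f x ≤ f y + D) :
    (∫⁻ x, f x ∂ρ) - (∫⁻ x, f x ∂σ) ≤ c * D := by
  have h1 : ∫⁻ x, f x ∂ρ ≤ ((⨅ y, f y) + D) * c := by
    refine le_trans (lintegral_mono fun x => ?_) (by rw [lintegral_const, hρ])
    have hx : f x ≤ ⨅ y, (D + f y) := le_iInf fun y => by rw [add_comm]; exact hf x y
    calc f x ≤ D + ⨅ y, f y := hx.trans (le_of_eq ENNReal.add_iInf.symm)
      _ = (⨅ y, f y) + D := add_comm _ _
  have h2 : (⨅ y, f y) * c ≤ ∫⁻ x, f x ∂σ := by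
    refine le_trans (le_of_eq ?_) (lintegral_mono fun x => iInf_le _ x)
    rw [lintegral_const, hσ]
  rw [tsub_le_iff_right]
  calc ∫⁻ x, f x ∂ρ ≤ ((⨅ y, f y) + D) * c := h1
    _ = (⨅ y, f y) * c + D * c := by rw [add_mul]
    _ ≤ (∫⁻ x, f x ∂σ) + c * D := add_le_add h2 (le_of_eq (mul_comm _ _))
    _ = c * D + ∫⁻ x, f x ∂σ := add_comm _ _

lemma tv_bind_le {μ ν : Measure X} [IsProbabilityMeasure μ] [IsProbabilityMeasure ν]
    {h : X → Measure X} (hmeas : Measurable h) (hprob : ∀ x, IsProbabilityMeasure (h x)) :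
    tv (μ.bind h) (ν.bind h) ≤ tv μ ν * ⨆ (x : X) (y : X), tv (h x) (h y) := by
  haveI hX : Nonempty X := by
    by_contra hX
    rw [not_nonempty_iff] at hX
    have h1 : μ Set.univ = 1 := measure_univ
    rw [Set.univ_eq_empty_iff.2 hX, measure_empty] at h1
    exact zero_ne_one h1
  obtain ⟨s, hs, hs1, hs2⟩ := hahn_decomposition (μ := μ) (ν := ν)
  set D := ⨆ (x : X) (y : X), tv (h x) (h y) with hD
  have hle1 : ν.restrict s ≤ μ.restrict s := by
    rw [Measure.le_iff]
    intro A hA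
    rw [Measure.restrict_apply hA, Measure.restrict_apply hA]
    exact hs1 _ (hA.inter hs) Set.inter_subset_right
  have hle2 : μ.restrict sᶜ ≤ ν.restrict sᶜ := by
    rw [Measure.le_iff]
    intro A hA
    rw [Measure.restrict_apply hA, Measure.restrict_apply hA]
    exact hs2 _ (hA.inter hs.compl) Set.inter_subset_right
  set β := μ s - ν s with hβ
  have hmass1 : (μ.restrict s - ν.restrict s) Set.univ = β := by
    rw [Measure.sub_apply MeasurableSet.univ hle1,
      Measure.restrict_apply_univ, Measure.restrict_apply_univ]
  have hmass2 : (ν.restrict sᶜ - μ.restrict sᶜ) Set.univ = β := by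
    rw [Measure.sub_apply MeasurableSet.univ hle2,
      Measure.restrict_apply_univ, Measure.restrict_apply_univ]
    refine ENNReal.sub_eq_of_eq_add (measure_ne_top μ sᶜ) ?_
    have hνs : ν s ≤ μ s := hs1 s hs subset_rfl
    have h1 : μ s + μ sᶜ = 1 := by rw [measure_add_measure_compl hs, measure_univ]
    have h2 : ν s + ν sᶜ = 1 := by rw [measure_add_measure_compl hs, measure_univ]
    refine (ENNReal.add_right_inj (a := ν s) (measure_ne_top ν s)).mp ?_
    rw [h2, ← add_assoc, add_tsub_cancel_of_le hνs, h1]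
  have hdecμ : μ = (μ.restrict s - ν.restrict s) + (ν.restrict s + μ.restrict sᶜ) := by
    have hcan := Measure.sub_add_cancel_of_le hle1
    calc μ = μ.restrict s + μ.restrict sᶜ := (Measure.restrict_add_restrict_compl hs).symm
      _ = ((μ.restrict s - ν.restrict s) + ν.restrict s) + μ.restrict sᶜ := by rw [hcan]
      _ = (μ.restrict s - ν.restrict s) + (ν.restrict s + μ.restrict sᶜ) := add_assoc _ _ _
  have hdecν : ν = (ν.restrict sᶜ - μ.restrict sᶜ) + (ν.restrict s + μ.restrict sᶜ) := by
    have hcan := Measure.sub_add_cancel_of_le hle2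
    calc ν = ν.restrict s + ν.restrict sᶜ := (Measure.restrict_add_restrict_compl hs).symm
      _ = ν.restrict s + ((ν.restrict sᶜ - μ.restrict sᶜ) + μ.restrict sᶜ) := by rw [hcan]
      _ = (ν.restrict sᶜ - μ.restrict sᶜ) + (ν.restrict s + μ.restrict sᶜ) := by
          rw [← add_assoc, add_comm (ν.restrict s) _, add_assoc]
  have hβ_le : β ≤ tv μ ν := sub_le_tv hs
  refine tv_le_of_forall fun A hA => ?_
  set f : X → ℝ≥0∞ := fun x => h x A with hfdef
  have hfd : ∀ x y, f x ≤ f y + D := by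
    intro x y
    rw [← tsub_le_iff_left]
    exact le_trans (sub_le_tv hA) (le_iSup₂ (f := fun x y => tv (h x) (h y)) x y)
  have hbμ : (μ.bind h) A
      = (∫⁻ x, f x ∂(μ.restrict s - ν.restrict s)) + ∫⁻ x, f x ∂(ν.restrict s + μ.restrict sᶜ) := by
    rw [Measure.bind_apply hA hmeas.aemeasurable]
    conv_lhs => rw [hdecμ]
    exact lintegral_add_measure f _ _
  have hbν : (ν.bind h) A
      = (∫⁻ x, f x ∂(ν.restrict sᶜ - μ.restrict sᶜ)) + ∫⁻ x, f x ∂(ν.restrict s + μ.restrict sᶜ) := by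
    rw [Measure.bind_apply hA hmeas.aemeasurable]
    conv_lhs => rw [hdecν]
    exact lintegral_add_measure f _ _
  have hcore1 := lintegral_diff_le hmass1 hmass2 hfd
  have hcore2 := lintegral_diff_le hmass2 hmass1 (fun x y => hfd x y)
  refine sup_le ?_ ?_
  · rw [hbμ, hbν]
    refine le_trans (add_tsub_add_le _ _ _) (le_trans hcore1 ?_)
    exact mul_le_mul_left hβ_le D
  · rw [hbμ, hbν]
    refine le_trans (add_tsub_add_le _ _ _) (le_trans hcore2 ?_)
    exact mul_le_mul_left hβ_le D

lemma dbar_le_one (hg : IsMarkov g) (t : ℕ) : dbar g t ≤ 1 := by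
  refine iSup₂_le fun x y => ?_
  haveI := iterK_prob hg t x
  haveI := iterK_prob hg t y
  exact tv_le_one _ _

lemma dbar_add_le (hg : IsMarkov g) (s t : ℕ) : dbar g (s + t) ≤ dbar g s * dbar g t := by
  refine iSup₂_le fun x y => ?_
  rw [iterK_add hg s t x, iterK_add hg s t y]
  haveI := iterK_prob hg s x
  haveI := iterK_prob hg s y
  calc tv ((iterK g s x).bind (iterK g t)) ((iterK g s y).bind (iterK g t))
      ≤ tv (iterK g s x) (iterK g s y) * ⨆ (x' : X) (y' : X), tv (iterK g t x') (iterK g t y') :=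
        tv_bind_le (iterK_meas hg t) (iterK_prob hg t)
    _ ≤ dbar g s * dbar g t :=
        mul_le_mul' (le_iSup₂ (f := fun x' y' => tv (iterK g s x') (iterK g s y')) x y) le_rfl

lemma dbar_add_le' (hg : IsMarkov g) (s t : ℕ) : dbar g (s + t) ≤ dbar g s := by
  refine le_trans (dbar_add_le hg s t) ?_
  calc dbar g s * dbar g t ≤ dbar g s * 1 := mul_le_mul' le_rfl (dbar_le_one hg t)
    _ = dbar g s := mul_one _

lemma dbar_pow (hg : IsMarkov g) (t : ℕ) : ∀ j : ℕ, dbar g (j * t) ≤ (dbar g t) ^ j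
  | 0 => by
    rw [Nat.zero_mul, pow_zero]
    exact dbar_le_one hg 0
  | (j+1) => by
    have : (j+1) * t = t + j * t := by ring
    rw [this, pow_succ]
    calc dbar g (t + j*t) ≤ dbar g t * dbar g (j*t) := dbar_add_le hg t (j*t)
      _ ≤ dbar g t * (dbar g t)^j := mul_le_mul' le_rfl (dbar_pow hg t j)
      _ = (dbar g t)^j * dbar g t := mul_comm _ _

lemma tv_iterK_le_dbar (hg : IsMarkov g) {π : Measure X} [IsProbabilityMeasure π]
    (hπ : Stationary g π) (k : ℕ) (x : X) :
    tv (iterK g k x) π ≤ dbar g k := by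
  have h1 : iterK g k x = (Measure.dirac x).bind (iterK g k) :=
    (Measure.dirac_bind (iterK_meas hg k) x).symm
  have h2 : π = π.bind (iterK g k) := (iterK_stationary hg hπ k).symm
  calc tv (iterK g k x) π
      = tv ((Measure.dirac x).bind (iterK g k)) (π.bind (iterK g k)) := by rw [← h1, ← h2]
    _ ≤ tv (Measure.dirac x) π * ⨆ (x' : X) (y' : X), tv (iterK g k x') (iterK g k y') :=
        tv_bind_le (iterK_meas hg k) (iterK_prob hg k)
    _ ≤ 1 * dbar g k := mul_le_mul' (tv_le_one _ _) le_rfl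
    _ = dbar g k := one_mul _

lemma lazy_isMarkov (hg : IsMarkov g) : IsMarkov (lazy g) := by
  constructor
  · intro x
    haveI := hg.1 x
    constructor
    simp [lazy, measure_univ, ENNReal.inv_two_add_inv_two]
  · intro A hA
    have heq : (fun x => lazy g x A)
        = fun x => 2⁻¹ * g x A + 2⁻¹ * (A.indicator (1 : X → ℝ≥0∞) x) := by
      funext x
      simp [lazy, Measure.dirac_apply' x hA]
    rw [heq]
    exact ((hg.2 A hA).const_mul _).add ((Measurable.indicator measurable_one hA).const_mul _)

lemma binom_step (w : ℕ → ℝ≥0∞) (T : ℕ) :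
    ∑ k ∈ Finset.range (T+2), (((T+1).choose k : ℝ≥0∞)) * ((2:ℝ≥0∞)^(T+1))⁻¹ * w k
    = 2⁻¹ * ∑ k ∈ Finset.range (T+1), ((T.choose k : ℝ≥0∞)) * ((2:ℝ≥0∞)^T)⁻¹ * w (k+1)
    + 2⁻¹ * ∑ k ∈ Finset.range (T+1), ((T.choose k : ℝ≥0∞)) * ((2:ℝ≥0∞)^T)⁻¹ * w k := by
  have hinv : ((2:ℝ≥0∞)^(T+1))⁻¹ = 2⁻¹ * ((2:ℝ≥0∞)^T)⁻¹ := by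
    rw [pow_succ, mul_comm, ENNReal.mul_inv (Or.inl (by norm_num)) (Or.inl (by norm_num))]
  set u : ℕ → ℝ≥0∞ := fun k => ((2:ℝ≥0∞)^T)⁻¹ * w k with hu
  have hL : ∀ k, (((T+1).choose k : ℝ≥0∞)) * ((2:ℝ≥0∞)^(T+1))⁻¹ * w k
      = 2⁻¹ * ((((T+1).choose k : ℝ≥0∞)) * u k) := by
    intro k
    rw [hinv, hu]
    ring
  have hR : ∀ k, ((T.choose k : ℝ≥0∞)) * ((2:ℝ≥0∞)^T)⁻¹ * w k
      = ((T.choose k : ℝ≥0∞)) * u k := by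
    intro k
    rw [hu]
    ring
  have hR' : ∀ k, ((T.choose k : ℝ≥0∞)) * ((2:ℝ≥0∞)^T)⁻¹ * w (k+1)
      = ((T.choose k : ℝ≥0∞)) * u (k+1) := by
    intro k
    rw [hu]
    ring
  simp_rw [hL, hR', hR]
  rw [← Finset.mul_sum, ← mul_add]
  congr 1
  rw [Finset.sum_range_succ' (fun k => (((T+1).choose k : ℝ≥0∞)) * u k) (T+1)]
  have hch : ∀ k, (((T+1).choose (k+1) : ℝ≥0∞)) = ((T.choose k : ℝ≥0∞)) + ((T.choose (k+1) : ℝ≥0∞)) := by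
    intro k
    rw [Nat.choose_succ_succ]
    push_cast
    ring
  simp_rw [hch, add_mul]
  rw [Finset.sum_add_distrib]
  have h2 : (∑ k ∈ Finset.range (T+1), ((T.choose (k+1) : ℝ≥0∞)) * u (k+1))
      + (((T+1).choose 0 : ℝ≥0∞)) * u 0
      = ∑ k ∈ Finset.range (T+1), ((T.choose k : ℝ≥0∞)) * u k := by
    rw [Finset.sum_range_succ (fun k => ((T.choose (k+1) : ℝ≥0∞)) * u (k+1)) T]
    rw [Finset.sum_range_succ' (fun k => ((T.choose k : ℝ≥0∞)) * u k) T]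
    simp [Nat.choose_succ_self]
  rw [add_assoc, h2]

lemma lazy_iterK_apply (hg : IsMarkov g) (T : ℕ) (x : X) {A : Set X} (hA : MeasurableSet A) :
    iterK (lazy g) T x A
      = ∑ k ∈ Finset.range (T+1), ((T.choose k : ℝ≥0∞)) * ((2:ℝ≥0∞)^T)⁻¹ * iterK g k x A := by
  have hlz := lazy_isMarkov hg
  induction T generalizing x with
  | zero => simp [iterK]
  | succ T ih =>
    have hF : Measurable fun y => iterK (lazy g) T y A := iterK_apply_meas hlz T hA
    rw [show iterK (lazy g) (T+1) x = (lazy g x).bind (iterK (lazy g) T) from rfl,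
      Measure.bind_apply hA (iterK_meas hlz T).aemeasurable,
      show lazy g x = (2:ℝ≥0∞)⁻¹ • g x + (2:ℝ≥0∞)⁻¹ • Measure.dirac x from rfl,
      lintegral_add_measure, lintegral_smul_measure, lintegral_smul_measure,
      lintegral_dirac' x hF]
    have hDF : ∫⁻ y, iterK (lazy g) T y A ∂(g x)
        = ∑ k ∈ Finset.range (T+1), ((T.choose k : ℝ≥0∞)) * ((2:ℝ≥0∞)^T)⁻¹ * iterK g (k+1) x A := by
      calc ∫⁻ y, iterK (lazy g) T y A ∂(g x)
          = ∫⁻ y, ∑ k ∈ Finset.range (T+1), ((T.choose k : ℝ≥0∞)) * ((2:ℝ≥0∞)^T)⁻¹ * iterK g k y A ∂(g x) := by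
            refine lintegral_congr fun y => ih y
        _ = ∑ k ∈ Finset.range (T+1), ∫⁻ y, ((T.choose k : ℝ≥0∞)) * ((2:ℝ≥0∞)^T)⁻¹ * iterK g k y A ∂(g x) :=
            lintegral_finset_sum _ (fun k _ => ((iterK_apply_meas hg k hA).const_mul _))
        _ = ∑ k ∈ Finset.range (T+1), ((T.choose k : ℝ≥0∞)) * ((2:ℝ≥0∞)^T)⁻¹ * ∫⁻ y, iterK g k y A ∂(g x) := by
            refine Finset.sum_congr rfl fun k _ => ?_
            rw [lintegral_const_mul _ (iterK_apply_meas hg k hA)]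
        _ = ∑ k ∈ Finset.range (T+1), ((T.choose k : ℝ≥0∞)) * ((2:ℝ≥0∞)^T)⁻¹ * iterK g (k+1) x A := by
            refine Finset.sum_congr rfl fun k _ => ?_
            rw [show iterK g (k+1) x = (g x).bind (iterK g k) from rfl,
              Measure.bind_apply hA (iterK_meas hg k).aemeasurable]
    rw [hDF, ih x, binom_step, smul_eq_mul, smul_eq_mul]

lemma sum_tsub_le_sum {s : Finset ℕ} (a b : ℕ → ℝ≥0∞) :
    (∑ k ∈ s, a k) - (∑ k ∈ s, b k) ≤ ∑ k ∈ s, (a k - b k) := by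
  rw [tsub_le_iff_right, ← Finset.sum_add_distrib]
  exact Finset.sum_le_sum fun k _ => le_tsub_add

lemma mul_tsub_le' (c x y : ℝ≥0∞) : c * x - c * y ≤ c * (x - y) := by
  rw [tsub_le_iff_right, ← mul_add]
  exact mul_le_mul_right le_tsub_add c

lemma tv_convex {ν : Measure X} {n : ℕ} {c : ℕ → ℝ≥0∞} {w : ℕ → Measure X}
    (hc : ∑ k ∈ Finset.range n, c k = 1) {μ : Measure X}
    (hμ : ∀ A : Set X, MeasurableSet A → μ A = ∑ k ∈ Finset.range n, c k * w k A) :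
    tv μ ν ≤ ∑ k ∈ Finset.range n, c k * tv (w k) ν := by
  refine tv_le_of_forall fun A hA => ?_
  have hν : ν A = ∑ k ∈ Finset.range n, c k * ν A := by
    rw [← Finset.sum_mul, hc, one_mul]
  refine sup_le ?_ ?_
  · rw [hμ A hA]
    calc (∑ k ∈ Finset.range n, c k * w k A) - ν A
        = (∑ k ∈ Finset.range n, c k * w k A) - ∑ k ∈ Finset.range n, c k * ν A := by rw [← hν]
      _ ≤ ∑ k ∈ Finset.range n, (c k * w k A - c k * ν A) := sum_tsub_le_sum _ _
      _ ≤ ∑ k ∈ Finset.range n, c k * tv (w k) ν := by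
          refine Finset.sum_le_sum fun k _ => ?_
          exact le_trans (mul_tsub_le' _ _ _) (mul_le_mul_right (sub_le_tv hA) _)
  · rw [hμ A hA]
    calc ν A - (∑ k ∈ Finset.range n, c k * w k A)
        = (∑ k ∈ Finset.range n, c k * ν A) - ∑ k ∈ Finset.range n, c k * w k A := by rw [← hν]
      _ ≤ ∑ k ∈ Finset.range n, (c k * ν A - c k * w k A) := sum_tsub_le_sum _ _
      _ ≤ ∑ k ∈ Finset.range n, c k * tv (w k) ν := by
          refine Finset.sum_le_sum fun k _ => ?_
          exact le_trans (mul_tsub_le' _ _ _) (mul_le_mul_right (sub_le_tv' hA) _)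

lemma choose_var_sum : ∀ T : ℕ,
    ∑ k ∈ Finset.range (T+1), (T.choose k : ℝ) * ((T:ℝ) - 2*k)^2 = (T:ℝ) * 2^T := by
  intro T
  induction T with
  | zero => simp
  | succ T ih =>
    have hsum2 : ∑ k ∈ Finset.range (T+1), (T.choose k : ℝ) = 2^T := by
      rw [← Nat.cast_sum]
      rw [Nat.sum_range_choose]
      push_cast
      ring
    set F : ℕ → ℝ := fun k => (T.choose k : ℝ) * ((T:ℝ) + 1 - 2*k)^2 with hF
    have hG : ∑ k ∈ Finset.range (T+2), F k = ∑ k ∈ Finset.range (T+1), F k := by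
      rw [Finset.sum_range_succ]
      simp [hF, Nat.choose_succ_self]
    have hshift : ∑ k ∈ Finset.range (T+1), F (k+1)
        = (∑ k ∈ Finset.range (T+1), F k) - F 0 := by
      have h := Finset.sum_range_succ' F (T+1)
      rw [hG] at h
      linarith
    have hF0 : F 0 = ((T:ℝ)+1)^2 := by simp [hF]
    have hmain : ∑ k ∈ Finset.range (T+2), ((T+1).choose k : ℝ) * (((T:ℝ)+1) - 2*k)^2
        = ∑ k ∈ Finset.range (T+1), ((T.choose k : ℝ) * (((T:ℝ) - 2*k) - 1)^2 + F (k+1))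
        + ((T:ℝ)+1)^2 := by
      rw [Finset.sum_range_succ' (fun k => ((T+1).choose k : ℝ) * (((T:ℝ)+1) - 2*k)^2) (T+1)]
      congr 1
      · refine Finset.sum_congr rfl fun k _ => ?_
        have hch : ((T+1).choose (k+1) : ℝ) = (T.choose k : ℝ) + (T.choose (k+1) : ℝ) := by
          rw [Nat.choose_succ_succ]
          push_cast
          ring
        rw [hch]
        simp only [hF]
        push_cast
        ring
      · simp
    have hfin : ∑ k ∈ Finset.range (T+2), ((T+1).choose k : ℝ) * (((T:ℝ)+1) - 2*k)^2
        = ∑ k ∈ Finset.range (T+1), (T.choose k : ℝ) * (2*((T:ℝ) - 2*k)^2 + 2) := by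
      rw [hmain, Finset.sum_add_distrib, hshift, hF0]
      have hexp : ∑ k ∈ Finset.range (T+1), (T.choose k : ℝ) * (((T:ℝ) - 2*k) - 1)^2
          + ∑ k ∈ Finset.range (T+1), F k
          = ∑ k ∈ Finset.range (T+1), (T.choose k : ℝ) * (2*((T:ℝ) - 2*k)^2 + 2) := by
        rw [← Finset.sum_add_distrib]
        refine Finset.sum_congr rfl fun k _ => ?_
        simp only [hF]
        ring
      linarith
    have hrw : ∑ k ∈ Finset.range (T+1), (T.choose k : ℝ) * (2*((T:ℝ) - 2*k)^2 + 2)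
        = 2 * ((T:ℝ) * 2^T) + 2 * 2^T := by
      have : ∀ k, (T.choose k : ℝ) * (2*((T:ℝ) - 2*k)^2 + 2)
          = 2 * ((T.choose k : ℝ) * ((T:ℝ) - 2*k)^2) + 2 * (T.choose k : ℝ) := by
        intro k
        ring
      simp_rw [this]
      rw [Finset.sum_add_distrib, ← Finset.mul_sum, ← Finset.mul_sum, ih, hsum2]
    have h12 : T+1+1 = T+2 := rfl
    calc ∑ k ∈ Finset.range (T+1+1), ((T+1).choose k : ℝ) * ((((T:ℕ)+1:ℕ):ℝ) - 2*k)^2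
        = ∑ k ∈ Finset.range (T+2), ((T+1).choose k : ℝ) * (((T:ℝ)+1) - 2*k)^2 := by
          rw [h12]
          refine Finset.sum_congr rfl fun k _ => ?_
          push_cast
          ring
      _ = 2 * ((T:ℝ) * 2^T) + 2 * 2^T := by rw [hfin, hrw]
      _ = (((T:ℕ)+1:ℕ):ℝ) * 2^(T+1) := by
          push_cast
          ring

lemma choose_tail_le (T s : ℕ) (hT : 0 < T) (hs : 4*s ≤ T) :
    (∑ k ∈ Finset.range s, (T.choose k : ℝ)) ≤ 4 * 2^T / T := by
  have hT' : (0:ℝ) < T := by exact_mod_cast hT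
  have key : ∀ k ∈ Finset.range s, ((T:ℝ)^2/4) * (T.choose k : ℝ)
      ≤ (T.choose k : ℝ) * ((T:ℝ) - 2*k)^2 := by
    intro k hk
    rw [Finset.mem_range] at hk
    have hk4 : (4*k + 4 : ℕ) ≤ T := by omega
    have hk4' : (4*(k:ℝ) + 4) ≤ (T:ℝ) := by exact_mod_cast hk4
    have h1 : (T:ℝ)/2 ≤ (T:ℝ) - 2*k := by linarith
    have h2 : ((T:ℝ)/2)^2 ≤ ((T:ℝ) - 2*k)^2 := by
      apply pow_le_pow_left₀ (by positivity) h1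
    calc ((T:ℝ)^2/4) * (T.choose k : ℝ) = (T.choose k : ℝ) * (((T:ℝ)/2)^2) := by ring
      _ ≤ (T.choose k : ℝ) * ((T:ℝ) - 2*k)^2 := by
          exact mul_le_mul_of_nonneg_left h2 (by positivity)
  have h3 : ((T:ℝ)^2/4) * ∑ k ∈ Finset.range s, (T.choose k : ℝ) ≤ (T:ℝ)*2^T := by
    rw [Finset.mul_sum]
    refine le_trans (Finset.sum_le_sum key) ?_
    refine le_trans (Finset.sum_le_sum_of_subset_of_nonneg ?_ ?_) (le_of_eq (choose_var_sum T))
    · intro k hk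
      rw [Finset.mem_range] at *
      omega
    · intro k _ _
      positivity
  rw [le_div_iff₀ hT']
  nlinarith [h3, hT']

lemma tail_ennreal (T s : ℕ) (hT : 0 < T) (hs : 4*s ≤ T) :
    ∑ k ∈ Finset.range s, ((T.choose k : ℝ≥0∞)) * ((2:ℝ≥0∞)^T)⁻¹ ≤ ENNReal.ofReal (4 / T) := by
  have h2T : ((2:ℝ≥0∞)^T) ≠ 0 := by positivity
  have h2T' : ((2:ℝ≥0∞)^T) ≠ ⊤ := by
    exact ENNReal.pow_ne_top (by norm_num)
  rw [← Finset.sum_mul, ← div_eq_mul_inv, ENNReal.div_le_iff h2T h2T']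
  have hcast : (∑ k ∈ Finset.range s, ((T.choose k : ℝ≥0∞)))
      = ENNReal.ofReal (∑ k ∈ Finset.range s, (T.choose k : ℝ)) := by
    rw [ENNReal.ofReal_sum_of_nonneg (fun k _ => by positivity)]
    exact Finset.sum_congr rfl fun k _ => (ENNReal.ofReal_natCast _).symm
  have h2 : ((2:ℝ≥0∞)^T) = ENNReal.ofReal ((2:ℝ)^T) := by
    rw [ENNReal.ofReal_pow (by norm_num)]
    norm_num
  rw [hcast, h2, ← ENNReal.ofReal_mul (by positivity)]
  apply ENNReal.ofReal_le_ofReal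
  have h := choose_tail_le T s hT hs
  have hT' : (0:ℝ) < T := by exact_mod_cast hT
  calc (∑ k ∈ Finset.range s, (T.choose k : ℝ)) ≤ 4 * 2^T / T := h
    _ = 4/T * 2^T := by ring

lemma dbar_le_of_mix (hg : IsMarkov g) {π : Measure X} [IsProbabilityMeasure π]
    {t : ℕ} {e : ℝ≥0∞} (ht : ∀ x, tv (iterK g t x) π ≤ e) : dbar g t ≤ e + e := by
  refine iSup₂_le fun x y => ?_
  refine le_trans (tv_triangle _ π _) (add_le_add (ht x) ?_)
  rw [tv_symm]
  exact ht y

end Proof15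

/-- the lazy mixing time is bounded by a constant (depending only on
`ε`) multiple of the mixing time. -/
theorem stmt15 (ε : ℝ) (hε0 : 0 < ε) (hε1 : ε < 1 / 2) :
    ∃ C : ℝ, 0 < C ∧
      ∀ (X : Type) [MetricSpace X] [MeasurableSpace X] [BorelSpace X]
        [SigmaCompactSpace X] (g : X → Measure X) (π : Measure X),
        IsMarkov g → IsProbabilityMeasure π → Stationary g π →
        mixTime (lazy g) π (ENNReal.ofReal ε) ≤
          ENNReal.ofReal C * mixTime g π (ENNReal.ofReal ε) := by
  obtain ⟨j, hj⟩ := exists_pow_lt_of_lt_one (x := ε/2) (y := 2*ε) (by linarith) (by linarith)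
  set m : ℕ := max (4*j) (⌈(8:ℝ)/ε⌉₊ + 1) with hm
  have hm1 : 1 ≤ m := le_trans (by omega) (le_max_right (4*j) (⌈(8:ℝ)/ε⌉₊ + 1))
  have hm4j : 4*j ≤ m := le_max_left _ _
  have hm8 : (8:ℝ)/ε ≤ m := by
    have h1 : ((8:ℝ)/ε) ≤ (⌈(8:ℝ)/ε⌉₊ : ℝ) := Nat.le_ceil _
    have h2' : (⌈(8:ℝ)/ε⌉₊ + 1 : ℕ) ≤ m := le_max_right _ _
    have h2 : ((⌈(8:ℝ)/ε⌉₊ + 1 : ℕ) : ℝ) ≤ (m:ℝ) := by exact_mod_cast h2'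
    push_cast at h2
    linarith
  have hmpos : (0:ℝ) < (m:ℝ) := by
    have : (1:ℝ) ≤ (m:ℝ) := by exact_mod_cast hm1
    linarith
  refine ⟨(m:ℝ), hmpos, ?_⟩
  intro X _ _ _ _ g π hg hπ hst
  haveI := hπ
  set e := ENNReal.ofReal ε with he
  have hmain : ∀ t : ℕ, (∀ x, tv (iterK g t x) π ≤ e) →
      ∀ x, tv (iterK (lazy g) (m*t) x) π ≤ e := by
    intro t ht x
    rcases Nat.eq_zero_or_pos t with ht0 | htpos
    · subst ht0
      simpa [iterK] using ht x
    · set T := m * t with hT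
      have hT1 : 0 < T := Nat.mul_pos (by omega) htpos
      have hjtT : 4*(j*t) ≤ T := by
        calc 4*(j*t) = (4*j)*t := by ring
          _ ≤ m*t := Nat.mul_le_mul_right t hm4j
      have hjtT1 : j*t ≤ T + 1 := by
        have : j*t ≤ 4*(j*t) := by omega
        omega
      have hlz := lazy_isMarkov hg
      set c : ℕ → ℝ≥0∞ := fun k => ((T.choose k : ℝ≥0∞)) * ((2:ℝ≥0∞)^T)⁻¹ with hc
      have hcsum : ∑ k ∈ Finset.range (T+1), c k = 1 := by
        rw [hc, ← Finset.sum_mul]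
        have hch : (∑ k ∈ Finset.range (T+1), ((T.choose k : ℝ≥0∞))) = 2^T := by
          rw [← Nat.cast_sum, Nat.sum_range_choose]
          push_cast
          ring
        rw [hch, ENNReal.mul_inv_cancel (by positivity) (ENNReal.pow_ne_top (by norm_num))]
      have hconv := tv_convex (ν := π) hcsum (μ := iterK (lazy g) T x)
        (fun A hA => lazy_iterK_apply hg T x hA)
      refine le_trans hconv ?_
      have hsplit : ∑ k ∈ Finset.range (T+1), c k * tv (iterK g k x) π
          = ∑ k ∈ Finset.Ico 0 (j*t), c k * tv (iterK g k x) π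
          + ∑ k ∈ Finset.Ico (j*t) (T+1), c k * tv (iterK g k x) π := by
        rw [Finset.range_eq_Ico,
          Finset.sum_Ico_consecutive _ (Nat.zero_le _) hjtT1]
      rw [hsplit]
      have hεhalf : (0:ℝ) ≤ ε/2 := by linarith
      have hbound1 : ∑ k ∈ Finset.Ico 0 (j*t), c k * tv (iterK g k x) π
          ≤ ENNReal.ofReal (ε/2) := by
        have hstep1 : ∑ k ∈ Finset.Ico 0 (j*t), c k * tv (iterK g k x) π
            ≤ ∑ k ∈ Finset.range (j*t), c k := by
          rw [Finset.range_eq_Ico]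
          refine Finset.sum_le_sum fun k _ => ?_
          haveI := iterK_prob hg k x
          calc c k * tv (iterK g k x) π ≤ c k * 1 := mul_le_mul_right (tv_le_one _ _) _
            _ = c k := mul_one _
        refine le_trans hstep1 (le_trans (tail_ennreal T (j*t) hT1 hjtT) ?_)
        apply ENNReal.ofReal_le_ofReal
        have hTm' : m ≤ T := by
          calc m = m * 1 := (Nat.mul_one m).symm
            _ ≤ m * t := Nat.mul_le_mul_left m htpos
        have hTm : (m:ℝ) ≤ (T:ℝ) := by exact_mod_cast hTm'
        have hTpos : (0:ℝ) < (T:ℝ) := by exact_mod_cast hT1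
        have hεm : 8 ≤ ε * m := by
          have := (div_le_iff₀ hε0).mp hm8
          linarith
        have h4m : 4/(T:ℝ) ≤ 4/(m:ℝ) := by
          apply div_le_div_of_nonneg_left (by norm_num) hmpos hTm
        have h4ε : 4/(m:ℝ) ≤ ε/2 := by
          rw [div_le_div_iff₀ hmpos (by norm_num)]
          linarith
        linarith
      have hdb : dbar g t ≤ ENNReal.ofReal (2*ε) := by
        refine le_trans (dbar_le_of_mix hg ht) ?_
        rw [he, ← ENNReal.ofReal_add hε0.le hε0.le]
        apply ENNReal.ofReal_le_ofReal
        linarith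
      have hmid : ∀ k ∈ Finset.Ico (j*t) (T+1), tv (iterK g k x) π ≤ ENNReal.ofReal (ε/2) := by
        intro k hk
        rw [Finset.mem_Ico] at hk
        obtain ⟨r, hr⟩ := Nat.exists_eq_add_of_le hk.1
        calc tv (iterK g k x) π ≤ dbar g k := tv_iterK_le_dbar hg hst k x
          _ = dbar g (j*t + r) := by rw [← hr]
          _ ≤ dbar g (j*t) := dbar_add_le' hg (j*t) r
          _ ≤ (dbar g t)^j := dbar_pow hg t j
          _ ≤ (ENNReal.ofReal (2*ε))^j := pow_le_pow_left₀ zero_le hdb j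
          _ = ENNReal.ofReal ((2*ε)^j) := (ENNReal.ofReal_pow (by linarith) j).symm
          _ ≤ ENNReal.ofReal (ε/2) := ENNReal.ofReal_le_ofReal (le_of_lt hj)
      have hbound2 : ∑ k ∈ Finset.Ico (j*t) (T+1), c k * tv (iterK g k x) π
          ≤ ENNReal.ofReal (ε/2) := by
        calc ∑ k ∈ Finset.Ico (j*t) (T+1), c k * tv (iterK g k x) π
            ≤ ∑ k ∈ Finset.Ico (j*t) (T+1), c k * ENNReal.ofReal (ε/2) :=
              Finset.sum_le_sum fun k hk => mul_le_mul_right (hmid k hk) _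
          _ = (∑ k ∈ Finset.Ico (j*t) (T+1), c k) * ENNReal.ofReal (ε/2) :=
              (Finset.sum_mul _ _ _).symm
          _ ≤ 1 * ENNReal.ofReal (ε/2) := by
              refine mul_le_mul_left ?_ _
              rw [← hcsum, Finset.range_eq_Ico]
              refine Finset.sum_le_sum_of_subset ?_
              intro k hk
              rw [Finset.mem_Ico] at *
              omega
          _ = ENNReal.ofReal (ε/2) := one_mul _
      calc ∑ k ∈ Finset.Ico 0 (j*t), c k * tv (iterK g k x) π
          + ∑ k ∈ Finset.Ico (j*t) (T+1), c k * tv (iterK g k x) π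
          ≤ ENNReal.ofReal (ε/2) + ENNReal.ofReal (ε/2) := add_le_add hbound1 hbound2
        _ = e := by
            rw [he, ← ENNReal.ofReal_add hεhalf hεhalf]
            congr 1
            ring
  have hrhs : ENNReal.ofReal ((m:ℝ)) * mixTime g π e
      = ⨅ (t : ℕ), ENNReal.ofReal ((m:ℝ)) * ⨅ (_ : ∀ x, tv (iterK g t x) π ≤ e), (t:ℝ≥0∞) := by
    rw [mixTime]
    exact ENNReal.mul_iInf (fun h => absurd h ENNReal.ofReal_ne_top)
  rw [hrhs]
  refine le_iInf fun t => ?_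
  by_cases hP : ∀ x, tv (iterK g t x) π ≤ e
  · rw [iInf_pos hP]
    have h1 : mixTime (lazy g) π e ≤ ((m*t : ℕ) : ℝ≥0∞) :=
      iInf_le_of_le (m*t) (iInf_le_of_le (hmain t hP) le_rfl)
    calc mixTime (lazy g) π e ≤ ((m*t:ℕ):ℝ≥0∞) := h1
      _ = ENNReal.ofReal ((m:ℝ)) * (t:ℝ≥0∞) := by
          rw [Nat.cast_mul, ENNReal.ofReal_natCast]
  · rw [iInf_neg hP]
    have hne : ENNReal.ofReal ((m:ℝ)) ≠ 0 := by
      simp only [ne_eq, ENNReal.ofReal_eq_zero, not_le]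
      exact hmpos
    rw [ENNReal.mul_top hne]
    exact le_top
end MixHit
end
end

section
/- Let g be an ergodic discrete-time Markov transition kernel on a σ-compact metric state space X with stationary distribution π, and let S be a Borel set with π(S) > 0. Then the lazy kernel of the trace of g on S equals the trace on S of the lazy kernel of g: (g^{(S)})_L = (g_L)^{(S)}. -/
open MeasureTheory ENNReal

noncomputable section

namespace MixHit

variable {X : Type*} [MeasurableSpace X]

section Aux

variable {X : Type*} [MeasurableSpace X]

lemma isMarkov_measurable {g : X → Measure X} (hg : IsMarkov g) : Measurable g :=
  Measure.measurable_of_measurable_coe _ fun A hA => hg.2 A hA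

lemma lazy_apply (g : X → Measure X) (x : X) {A : Set X} (hA : MeasurableSet A) :
    lazy g x A = 2⁻¹ * g x A + 2⁻¹ * A.indicator 1 x := by
  simp [lazy, Measure.add_apply, Measure.smul_apply, smul_eq_mul,
    Measure.dirac_apply' x hA]

lemma isMarkov_lazy {g : X → Measure X} (hg : IsMarkov g) : IsMarkov (lazy g) := by
  constructor
  · intro x
    have := hg.1 x
    constructor
    rw [lazy_apply g x MeasurableSet.univ]
    simp [measure_univ, ENNReal.inv_two_add_inv_two]
  · intro A hA
    have : (fun x => lazy g x A) = fun x => 2⁻¹ * g x A + 2⁻¹ * A.indicator 1 x := by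
      funext x; exact lazy_apply g x hA
    rw [this]
    exact ((hg.2 A hA).const_mul _).add ((measurable_const.indicator hA).const_mul _)

lemma lintegral_lazy (g : X → Measure X) (x : X) {f : X → ℝ≥0∞} (hf : Measurable f) :
    ∫⁻ z, f z ∂(lazy g x) = 2⁻¹ * ∫⁻ z, f z ∂(g x) + 2⁻¹ * f x := by
  simp [lazy, lintegral_add_measure, lintegral_smul_measure, lintegral_dirac' x hf]

variable {h : X → Measure X} {S : Set X}

lemma enterDist_zero_apply (hS : MeasurableSet S) (x : X) {A : Set X}
    (hA : MeasurableSet A) : enterDist h S 0 x A = (A ∩ S).indicator 1 x := by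
  simp only [enterDist]
  rw [Measure.restrict_apply hA, Measure.dirac_apply' x (hA.inter hS)]

lemma measurable_enterDist (hS : MeasurableSet S) (hh : Measurable h) :
    ∀ n, Measurable (enterDist h S n)
  | 0 => by
      apply Measure.measurable_of_measurable_coe
      intro A hA
      have : (fun x => enterDist h S 0 x A) = fun x => (A ∩ S).indicator 1 x := by
        funext x; exact enterDist_zero_apply hS x hA
      rw [this]
      exact measurable_const.indicator (hA.inter hS)
  | n + 1 => by
      have ih := measurable_enterDist hS hh n
      apply Measure.measurable_of_measurable_coe
      intro A hA
      have : (fun x => enterDist h S (n + 1) x A)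
          = Sᶜ.indicator (fun y => ∫⁻ z, enterDist h S n z A ∂(h y)) := by
        funext x
        by_cases hx : x ∈ Sᶜ
        · simp only [enterDist, Set.indicator_of_mem hx]
          exact Measure.bind_apply hA ih.aemeasurable
        · simp [enterDist, Set.indicator_of_notMem hx]
      rw [this]
      exact ((Measure.measurable_lintegral
        ((Measure.measurable_coe hA).comp ih)).comp hh).indicator hS.compl

lemma enterDist_succ_apply (hS : MeasurableSet S) (hh : Measurable h) (n : ℕ) (x : X)
    {A : Set X} (hA : MeasurableSet A) :
    enterDist h S (n + 1) x A
      = Sᶜ.indicator (fun y => ∫⁻ z, enterDist h S n z A ∂(h y)) x := by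
  by_cases hx : x ∈ Sᶜ
  · simp only [enterDist, Set.indicator_of_mem hx]
    exact Measure.bind_apply hA (measurable_enterDist hS hh n).aemeasurable
  · simp [enterDist, Set.indicator_of_notMem hx]

lemma hitMeasure_apply (x : X) {A : Set X} (hA : MeasurableSet A) :
    hitMeasure h S x A = ∑' t, enterDist h S t x A :=
  Measure.sum_apply _ hA

lemma measurable_hitMeasure_apply (hS : MeasurableSet S) (hh : Measurable h)
    {A : Set X} (hA : MeasurableSet A) :
    Measurable fun x => hitMeasure h S x A := by
  have : (fun x => hitMeasure h S x A) = fun x => ∑' t, enterDist h S t x A := by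
    funext x; exact hitMeasure_apply x hA
  rw [this]
  exact Measurable.ennreal_tsum fun t =>
    (Measure.measurable_coe hA).comp (measurable_enterDist hS hh t)

lemma measurable_hitMeasure (hS : MeasurableSet S) (hh : Measurable h) :
    Measurable (hitMeasure h S) :=
  Measure.measurable_of_measurable_coe _ fun _A hA =>
    measurable_hitMeasure_apply hS hh hA

lemma hitMeasure_mem_eq (hS : MeasurableSet S) {z : X} (hz : z ∈ S) {A : Set X}
    (hA : MeasurableSet A) : hitMeasure h S z A = A.indicator 1 z := by
  rw [hitMeasure_apply z hA, tsum_eq_single 0]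
  · rw [enterDist_zero_apply hS z hA]
    by_cases hzA : z ∈ A
    · rw [Set.indicator_of_mem (Set.mem_inter hzA hz), Set.indicator_of_mem hzA]
    · rw [Set.indicator_of_notMem (fun hc => hzA hc.1), Set.indicator_of_notMem hzA]
  · intro t ht
    obtain ⟨n, rfl⟩ := Nat.exists_eq_succ_of_ne_zero ht
    simp [enterDist, Set.indicator_of_notMem (by simpa using hz : z ∉ Sᶜ)]

/-- The key induction: any measurable fixed point dominates the partial sums. -/
lemma sum_enterDist_le (hS : MeasurableSet S) (hh : IsMarkov h) {A : Set X}
    (hA : MeasurableSet A) {K : X → ℝ≥0∞} (hK : Measurable K)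
    (hK1 : ∀ z ∈ S, A.indicator 1 z ≤ K z)
    (hK2 : ∀ y ∉ S, ∫⁻ z, K z ∂(h y) ≤ K y) :
    ∀ N x, ∑ t ∈ Finset.range (N + 1), enterDist h S t x A ≤ K x := by
  have hhm := isMarkov_measurable hh
  have base : ∀ x, enterDist h S 0 x A ≤ K x := by
    intro x
    rw [enterDist_zero_apply hS x hA]
    by_cases hx : x ∈ A ∩ S
    · rw [Set.indicator_of_mem hx]
      have := hK1 x hx.2
      rwa [Set.indicator_of_mem hx.1] at this
    · rw [Set.indicator_of_notMem hx]; exact zero_le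
  intro N
  induction N with
  | zero => intro x; simpa using base x
  | succ N ih =>
    intro x
    rw [Finset.sum_range_succ']
    by_cases hx : x ∈ S
    · have hzero : ∀ t, enterDist h S (t + 1) x A = 0 := by
        intro t
        rw [enterDist_succ_apply hS hhm t x hA,
          Set.indicator_of_notMem (by simpa using hx)]
      simp only [hzero, Finset.sum_const_zero, zero_add]
      exact base x
    · have h0 : enterDist h S 0 x A = 0 := by
        rw [enterDist_zero_apply hS x hA,
          Set.indicator_of_notMem (fun hc => hx hc.2)]
      rw [h0, add_zero]
      have hstep : ∀ t, enterDist h S (t + 1) x A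
          = ∫⁻ z, enterDist h S t z A ∂(h x) := by
        intro t
        rw [enterDist_succ_apply hS hhm t x hA, Set.indicator_of_mem (by simpa using hx)]
      simp only [hstep]
      have hm : ∀ t, Measurable fun z => enterDist h S t z A := fun t =>
        (Measure.measurable_coe hA).comp (measurable_enterDist hS hhm t)
      rw [← lintegral_finset_sum _ fun t _ => hm t]
      calc ∫⁻ z, ∑ t ∈ Finset.range (N + 1), enterDist h S t z A ∂(h x)
          ≤ ∫⁻ z, K z ∂(h x) := lintegral_mono fun z => ih z
        _ ≤ K x := hK2 x hx

lemma hitMeasure_le (hS : MeasurableSet S) (hh : IsMarkov h) {A : Set X}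
    (hA : MeasurableSet A) {K : X → ℝ≥0∞} (hK : Measurable K)
    (hK1 : ∀ z ∈ S, A.indicator 1 z ≤ K z)
    (hK2 : ∀ y ∉ S, ∫⁻ z, K z ∂(h y) ≤ K y) (x : X) :
    hitMeasure h S x A ≤ K x := by
  rw [hitMeasure_apply x hA, ENNReal.tsum_eq_iSup_nat]
  apply iSup_le
  intro N
  cases N with
  | zero => simp
  | succ N => exact sum_enterDist_le hS hh hA hK hK1 hK2 N x

lemma hitMeasure_le_one (hS : MeasurableSet S) (hh : IsMarkov h) {A : Set X}
    (hA : MeasurableSet A) (x : X) : hitMeasure h S x A ≤ 1 := by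
  refine hitMeasure_le hS hh hA measurable_const ?_ ?_ x
  · intro z _
    by_cases hz : z ∈ A <;> simp [hz]
  · intro y _
    have := hh.1 y
    simp [lintegral_const, measure_univ]

lemma hitMeasure_fixed (hS : MeasurableSet S) (hh : IsMarkov h) {y : X} (hy : y ∉ S)
    {A : Set X} (hA : MeasurableSet A) :
    hitMeasure h S y A = ∫⁻ z, hitMeasure h S z A ∂(h y) := by
  have hhm := isMarkov_measurable hh
  rw [hitMeasure_apply y hA, tsum_eq_zero_add' ENNReal.summable]
  have h0 : enterDist h S 0 y A = 0 := by
    rw [enterDist_zero_apply hS y hA, Set.indicator_of_notMem (fun hc => hy hc.2)]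
  rw [h0, zero_add]
  have hstep : ∀ t, enterDist h S (t + 1) y A
      = ∫⁻ z, enterDist h S t z A ∂(h y) := by
    intro t
    rw [enterDist_succ_apply hS hhm t y hA, Set.indicator_of_mem (by simpa using hy)]
  simp only [hstep]
  have hm : ∀ t, Measurable fun z => enterDist h S t z A := fun t =>
    (Measure.measurable_coe hA).comp (measurable_enterDist hS hhm t)
  rw [← lintegral_tsum fun t => (hm t).aemeasurable]
  exact lintegral_congr fun z => (hitMeasure_apply z hA).symm

lemma half_cancel {a b : ℝ≥0∞} (ha : a ≠ ⊤) (hab : a = 2⁻¹ * b + 2⁻¹ * a) : a = b := by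
  have h2 : (2 : ℝ≥0∞) * a = 2 * (2⁻¹ * b) + 2 * (2⁻¹ * a) := by
    rw [← mul_add, ← hab]
  rw [← mul_assoc, ← mul_assoc, ENNReal.mul_inv_cancel two_ne_zero ENNReal.ofNat_ne_top,
    one_mul, one_mul, two_mul] at h2
  exact WithTop.add_right_cancel ha h2

lemma half_half {a : ℝ≥0∞} : 2⁻¹ * a + 2⁻¹ * a = a := by
  rw [← add_mul, ENNReal.inv_two_add_inv_two, one_mul]

/-- The crux: hitting measures of the lazy kernel agree with those of the kernel. -/
lemma hitMeasure_lazy_eq {g : X → Measure X} (hS : MeasurableSet S)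
    (hg : IsMarkov g) {A : Set X} (hA : MeasurableSet A) (x : X) :
    hitMeasure (lazy g) S x A = hitMeasure g S x A := by
  have hgm := isMarkov_measurable hg
  have hlg : IsMarkov (lazy g) := isMarkov_lazy hg
  have hlgm := isMarkov_measurable hlg
  have hHmeas : Measurable fun z => hitMeasure g S z A :=
    measurable_hitMeasure_apply (h := g) hS hgm hA
  have hH'meas : Measurable fun z => hitMeasure (lazy g) S z A :=
    measurable_hitMeasure_apply (h := lazy g) hS hlgm hA
  apply le_antisymm
  · -- H' ≤ H : H is a fixed point for the lazy kernel
    refine hitMeasure_le hS hlg hA hHmeas ?_ ?_ x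
    · intro z hz; rw [hitMeasure_mem_eq hS hz hA]
    · intro y hy
      rw [lintegral_lazy g y hHmeas, ← hitMeasure_fixed hS hg hy hA, half_half]
  · -- H ≤ H' : H' is a fixed point for g
    refine hitMeasure_le hS hg hA hH'meas ?_ ?_ x
    · intro z hz; rw [hitMeasure_mem_eq hS hz hA]
    · intro y hy
      have hfix := hitMeasure_fixed hS hlg hy hA
      rw [lintegral_lazy g y hH'meas] at hfix
      have hfin : hitMeasure (lazy g) S y A ≠ ⊤ :=
        ne_top_of_le_ne_top ENNReal.one_ne_top (hitMeasure_le_one hS hlg hA y)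
      exact (half_cancel hfin hfix).ge

end Aux

/-- the lazy kernel of the trace equals the trace of the lazy kernel. -/
theorem stmt18 {X : Type*} [MetricSpace X] [MeasurableSpace X] [BorelSpace X]
    [SigmaCompactSpace X] (g : X → Measure X) (π : Measure X)
    (hg : IsMarkov g) (hπ : IsProbabilityMeasure π) (herg : ErgodicK g π)
    (S : Set X) (hS : MeasurableSet S) (hpos : 0 < π S) :
    ∀ x ∈ S, lazy (traceK g S) x = traceK (lazy g) S x := by
  intro x hx
  have hgm := isMarkov_measurable hg
  have hlg : IsMarkov (lazy g) := isMarkov_lazy hg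
  have hlgm := isMarkov_measurable hlg
  ext A hA
  have hHmeas : Measurable fun z => hitMeasure g S z A :=
    measurable_hitMeasure_apply (h := g) hS hgm hA
  have hH'meas : Measurable fun z => hitMeasure (lazy g) S z A :=
    measurable_hitMeasure_apply (h := lazy g) hS hlgm hA
  have hL : lazy (traceK g S) x A
      = 2⁻¹ * ∫⁻ z, hitMeasure g S z A ∂(g x) + 2⁻¹ * A.indicator 1 x := by
    rw [lazy_apply _ x hA]
    congr 2
    exact Measure.bind_apply hA (measurable_hitMeasure hS hgm).aemeasurable
  have hR : traceK (lazy g) S x A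
      = 2⁻¹ * ∫⁻ z, hitMeasure g S z A ∂(g x) + 2⁻¹ * A.indicator 1 x := by
    show (lazy g x).bind (hitMeasure (lazy g) S) A = _
    rw [Measure.bind_apply hA (measurable_hitMeasure hS hlgm).aemeasurable,
      lintegral_lazy g x hH'meas]
    congr 1
    · congr 1
      exact lintegral_congr fun z => hitMeasure_lazy_eq hS hg hA z
    · congr 1
      rw [hitMeasure_lazy_eq hS hg hA x, hitMeasure_mem_eq hS hx hA]
  rw [hL, hR]
end MixHit
end
end
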